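/- Let F = [T_2^0, T_2^2], the 2×2 matrix with columns (0,0)^T and (1,1)^T. Then for every n ≥ 2, sat(n, F) = 3. -/

import Mathlib

/-- `F` is a submatrix of `M` (up to row/column permutations): there are injections
selecting rows and columns of `M` giving `F`. -/
def IsSubmatrix {α : Type*} {k c n m : ℕ} (F : Fin k → Fin c → α) (M : Fin n → Fin m → α) :
    Prop :=
  ∃ r : Fin k → Fin n, ∃ s : Fin c → Fin m,
    Function.Injective r ∧ Function.Injective s ∧ ∀ i j, M (r i) (s j) = F i j

/-- A matrix is simple if its columns are pairwise distinct. -/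
def Simple' {α : Type*} {n m : ℕ} (M : Fin n → Fin m → α) : Prop :=
  ∀ j₁ j₂ : Fin m, (∀ i, M i j₁ = M i j₂) → j₁ = j₂

/-- `C` occurs as a column of `M`. -/
def IsCol {α : Type*} {n m : ℕ} (M : Fin n → Fin m → α) (C : Fin n → α) : Prop :=
  ∃ j, ∀ i, M i j = C i

/-- The matrix `[M, C]` obtained by appending the column `C` to `M`. -/
def addCol {α : Type*} {n m : ℕ} (M : Fin n → Fin m → α) (C : Fin n → α) :
    Fin n → Fin (m + 1) → α :=
  fun i j => if h : (j : ℕ) < m then M i ⟨j, h⟩ else C i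

/-- `M` is `F`-saturated: simple, `F`-free, and adding any missing column creates `F`. -/
def Saturated {α : Type*} {k c n m : ℕ} (F : Fin k → Fin c → α) (M : Fin n → Fin m → α) :
    Prop :=
  Simple' M ∧ ¬ IsSubmatrix F M ∧
    ∀ C : Fin n → α, ¬ IsCol M C → IsSubmatrix F (addCol M C)

/-- The set of sizes (numbers of columns) of `F`-saturated `n`-row matrices. -/
def satSet {α : Type*} {k c : ℕ} (F : Fin k → Fin c → α) (n : ℕ) : Set ℕ :=
  {m | ∃ M : Fin n → Fin m → α, Saturated F M}

/-- The set of sizes of simple `F`-free `n`-row matrices. -/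
def forbSet {α : Type*} {k c : ℕ} (F : Fin k → Fin c → α) (n : ℕ) : Set ℕ :=
  {m | ∃ M : Fin n → Fin m → α, Simple' M ∧ ¬ IsSubmatrix F M}

/-- `K_k`: the `k × 2^k` 0-1 matrix of all distinct 0-1 columns of length `k`. -/
def Kfull (k : ℕ) : Fin k → Fin (2 ^ k) → Bool :=
  fun i j => Nat.testBit j.val i.val

section Helpers
variable {n m : ℕ}

lemma sub_iff (M : Fin n → Fin m → Bool) :
    IsSubmatrix (![![false, true], ![false, true]] : Fin 2 → Fin 2 → Bool) M ↔
      ∃ i j a b, i ≠ j ∧ M i a = false ∧ M j a = false ∧ M i b = true ∧ M j b = true := by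
  constructor
  · rintro ⟨r, s, hr, hs, h⟩
    refine ⟨r 0, r 1, s 0, s 1, fun he => absurd (hr he) (by decide), ?_, ?_, ?_, ?_⟩
    · simpa using h 0 0
    · simpa using h 1 0
    · simpa using h 0 1
    · simpa using h 1 1
  · rintro ⟨i, j, a, b, hij, h1, h2, h3, h4⟩
    have hab : a ≠ b := by
      rintro rfl; rw [h1] at h3; exact absurd h3 (by decide)
    refine ⟨![i, j], ![a, b], ?_, ?_, ?_⟩
    · intro u v h; fin_cases u <;> fin_cases v <;> simp_all
    · intro u v h; fin_cases u <;> fin_cases v <;> simp_all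
    · intro u v; fin_cases u <;> fin_cases v <;> simp_all

end Helpers
section Helpers
variable {n m : ℕ}

/-- No "conflict" between columns `p` and `q`: no pair of rows where `p` is 0,0 and `q` is 1,1. -/
def NC (p q : Fin n → Bool) : Prop :=
  ∀ i j : Fin n, i ≠ j → ¬(p i = false ∧ p j = false ∧ q i = true ∧ q j = true)

/-- Columns agreeing except at one position have no conflict. -/
lemma nc_one (p q : Fin n → Bool) (x : Fin n) (h : ∀ z, z ≠ x → p z = q z) : NC p q := by
  rintro i j hij ⟨h1, h2, h3, h4⟩
  rcases eq_or_ne i x with hix | hi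
  · have hj : j ≠ x := fun hh => hij (hix.trans hh.symm)
    rw [h j hj] at h2; rw [h2] at h4; exact absurd h4 (by decide)
  · rw [h i hi] at h1; rw [h1] at h3; exact absurd h3 (by decide)

/-- Columns differing at exactly two positions, in opposite directions, have no conflict. -/
lemma nc_two (p q : Fin n → Bool) (x y : Fin n) (hxy : x ≠ y)
    (hpx : p x = true) (hpy : p y = false)
    (h : ∀ z, z ≠ x → z ≠ y → p z = q z) : NC p q := by
  rintro i j hij ⟨h1, h2, h3, h4⟩
  have hi : i = x ∨ i = y := by
    by_contra hc
    push_neg at hc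
    rw [h i hc.1 hc.2] at h1; rw [h1] at h3; exact absurd h3 (by decide)
  have hj : j = x ∨ j = y := by
    by_contra hc
    push_neg at hc
    rw [h j hc.1 hc.2] at h2; rw [h2] at h4; exact absurd h4 (by decide)
  rcases hi with hi | hi
  · rw [hi, hpx] at h1; exact absurd h1 (by decide)
  · rcases hj with hj | hj
    · rw [hj, hpx] at h2; exact absurd h2 (by decide)
    · exact hij (hi.trans hj.symm)

end Helpers
section Key
variable {n : ℕ}

lemma key' (hn : 2 ≤ n) (c d : Fin n → Bool) (hcd : NC c d) (hdc : NC d c)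
    (x : Fin n) (hx : c x = false) (hx' : d x = true) :
    ∃ C : Fin n → Bool, C ≠ c ∧ C ≠ d ∧ NC c C ∧ NC C c ∧ NC d C ∧ NC C d := by
  by_cases hy : ∃ y, y ≠ x ∧ c y ≠ d y
  · -- c and d differ in two positions
    obtain ⟨y, hyx, hcy⟩ := hy
    have hcyt : c y = true := by
      by_contra hc
      have h1 : c y = false := by simpa using hc
      have h2 : d y = true := by
        cases hdy : d y
        · exact absurd (h1.trans hdy.symm) hcy
        · rfl
      exact hcd x y (fun h => hyx h.symm) ⟨hx, h1, hx', h2⟩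
    have hdyf : d y = false := by
      cases hdy : d y
      · rfl
      · exact absurd (hcyt.trans hdy.symm) hcy
    -- no third difference
    have hthird : ∀ z, z ≠ x → z ≠ y → c z = d z := by
      intro z hzx hzy
      by_contra hc
      cases hcz : c z
      · have hdz : d z = true := by
          cases hdz : d z
          · exact absurd (hcz.trans hdz.symm) hc
          · rfl
        exact hcd x z (fun h => hzx h.symm) ⟨hx, hcz, hx', hdz⟩
      · have hdz : d z = false := by
          cases hdz : d z
          · rfl
          · exact absurd (hcz.trans hdz.symm) hc
        exact hdc y z (fun h => hzy h.symm) ⟨hdyf, hdz, hcyt, hcz⟩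
    refine ⟨fun i => if i = x then true else c i, ?_, ?_, ?_, ?_, ?_, ?_⟩
    · intro h
      have := congrFun h x
      simp [hx] at this
    · intro h
      have := congrFun h y
      simp [hyx, hcyt, hdyf] at this
    · exact nc_one _ _ x (fun z hz => by simp [hz])
    · exact nc_one _ _ x (fun z hz => by simp [hz])
    · refine nc_one _ _ y (fun z hz => ?_)
      rcases eq_or_ne z x with rfl | hzx
      · simp [hx']
      · simp [hzx, hthird z hzx hz]
    · refine nc_one _ _ y (fun z hz => ?_)
      rcases eq_or_ne z x with rfl | hzx
      · simp [hx']
      · simp [hzx, hthird z hzx hz]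
  · -- c and d differ only at x
    push_neg at hy
    have hagree : ∀ z, z ≠ x → c z = d z := fun z hz => hy z hz
    by_cases hy2 : ∃ y, y ≠ x ∧ c y = false
    · obtain ⟨y, hyx, hcy⟩ := hy2
      have hxy : x ≠ y := fun h => hyx h.symm
      have hdy : d y = false := by rw [← hagree y hyx]; exact hcy
      refine ⟨fun i => if i = y then true else c i, ?_, ?_, ?_, ?_, ?_, ?_⟩
      · intro h
        have := congrFun h y
        simp [hcy] at this
      · intro h
        have := congrFun h x
        simp [hxy, hx, hx'] at this
      · exact nc_one _ _ y (fun z hz => by simp [hz])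
      · exact nc_one _ _ y (fun z hz => by simp [hz])
      · -- d vs C: d x = true, C x = false; d y = false, C y = true
        refine nc_two _ _ x y hxy hx' hdy
          (fun z hzx hzy => by simp only [if_neg hzy]; exact (hagree z hzx).symm)
      · refine nc_two _ _ y x hyx (by simp) (by simp [hxy, hx])
          (fun z hzy hzx => by simp only [if_neg hzy]; exact hagree z hzx)
    · -- c is all-true except x, d is all-true
      push_neg at hy2
      have hct : ∀ y, y ≠ x → c y = true := by
        intro y hy'
        cases h : c y
        · exact absurd h (hy2 y hy')
        · rfl
      obtain ⟨y, hyx⟩ : ∃ y : Fin n, y ≠ x := by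
        rcases eq_or_ne x ⟨0, by omega⟩ with rfl | h0
        · exact ⟨⟨1, by omega⟩, by simp [Fin.ext_iff]⟩
        · exact ⟨⟨0, by omega⟩, fun h => h0 h.symm⟩
      have hdt : ∀ z, d z = true := by
        intro z
        rcases eq_or_ne z x with rfl | hz
        · exact hx'
        · exact (hagree z hz).symm.trans (hct z hz)
      have hxy : x ≠ y := fun h => hyx h.symm
      refine ⟨fun i => if i = y then false else d i, ?_, ?_, ?_, ?_, ?_, ?_⟩
      · intro h
        have := congrFun h x
        simp [hxy, hx, hx'] at this
      · intro h
        have := congrFun h y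
        simp [hdt y] at this
      · -- c vs C : c x = false, C x = true ; c y = true, C y = false
        refine nc_two _ _ y x hyx (hct y hyx) hx
          (fun z hzy hzx => by simp only [if_neg hzy]; rw [hagree z hzx])
      · refine nc_two _ _ x y hxy (by simp [hxy, hdt x]) (by simp)
          (fun z hzx hzy => by simp only [if_neg hzy]; exact (hagree z hzx).symm)
      · exact nc_one _ _ y (fun z hz => by simp [hz])
      · exact nc_one _ _ y (fun z hz => by simp [hz])

end Key
section Witness
variable {n : ℕ}

/-- The witness matrix: columns are the indicators of `{0}`, `{1}`, `{0,1}`. -/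
def Mwit (n : ℕ) : Fin n → Fin 3 → Bool :=
  fun i j => if j.val = 0 then decide (i.val = 0)
    else if j.val = 1 then decide (i.val = 1)
    else decide (i.val = 0 ∨ i.val = 1)

lemma mwit_saturated (hn : 2 ≤ n) :
    Saturated (![![false, true], ![false, true]] : Fin 2 → Fin 2 → Bool) (Mwit n) := by
  have r0 : Fin n := ⟨0, by omega⟩
  set R0 : Fin n := ⟨0, by omega⟩ with hR0
  set R1 : Fin n := ⟨1, by omega⟩ with hR1
  refine ⟨?_, ?_, ?_⟩
  · -- Simple'
    intro j₁ j₂ h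
    have h0 := h R0
    have h1 := h R1
    fin_cases j₁ <;> fin_cases j₂ <;> simp_all [Mwit, hR0, hR1]
  · -- F-free
    rw [sub_iff]
    rintro ⟨i, j, a, b, hij, h1, h2, h3, h4⟩
    have hij' : i.val ≠ j.val := fun h => hij (Fin.ext h)
    fin_cases a <;> fin_cases b <;> simp [Mwit] at h1 h2 h3 h4 <;> omega
  · -- saturation
    intro C hC
    have hC' : ∀ j : Fin 3, ∃ i, Mwit n i j ≠ C i := by
      intro j
      by_contra hc
      push_neg at hc
      exact hC ⟨j, hc⟩
    rw [sub_iff]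
    have hcol : ∀ (i : Fin n) (k : ℕ) (hk : k < 3),
        addCol (Mwit n) C i ⟨k, by omega⟩ = Mwit n i ⟨k, hk⟩ := fun i k hk => dif_pos hk
    have hlast : ∀ i : Fin n, addCol (Mwit n) C i ⟨3, by omega⟩ = C i :=
      fun i => dif_neg (by simp)
    have hR01 : R0 ≠ R1 := by simp [hR0, hR1, Fin.ext_iff]
    cases hc0 : C R0 <;> cases hc1 : C R1
    · -- both false: rows R0 R1, cols 3 and 2
      exact ⟨R0, R1, ⟨3, by omega⟩, ⟨2, by omega⟩, hR01,
        (hlast R0).trans hc0, (hlast R1).trans hc1,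
        (hcol R0 2 (by omega)).trans (by simp [Mwit, hR0]),
        (hcol R1 2 (by omega)).trans (by simp [Mwit, hR1])⟩
    · -- C R0 = false, C R1 = true : use column 1 mismatch
      obtain ⟨z, hz⟩ := hC' ⟨1, by omega⟩
      have hz1 : z.val ≠ 1 := by
        intro h
        have : z = R1 := Fin.ext (by simpa [hR1] using h)
        rw [this] at hz
        simp [Mwit, hR1, hc1] at hz
        exact absurd (hc1.symm.trans hz) (by decide)
      have hz0 : z.val ≠ 0 := by
        intro h
        have : z = R0 := Fin.ext (by simpa [hR0] using h)
        rw [this] at hz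
        simp [Mwit, hR0, hc0] at hz
        exact absurd (hc0.symm.trans hz) (by decide)
      have hCz : C z = true := by
        simpa [Mwit, hz1] using hz
      refine ⟨R1, z, ⟨0, by omega⟩, ⟨3, by omega⟩, ?_, ?_, ?_, ?_, ?_⟩
      · intro h; subst h; exact hz1 rfl
      · exact (hcol R1 0 (by omega)).trans (by simp [Mwit, hR1])
      · exact (hcol z 0 (by omega)).trans (by simp [Mwit, hz0])
      · exact (hlast R1).trans hc1
      · exact (hlast z).trans hCz
    · -- C R0 = true, C R1 = false : use column 0 mismatch
      obtain ⟨z, hz⟩ := hC' ⟨0, by omega⟩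
      have hz0 : z.val ≠ 0 := by
        intro h
        have : z = R0 := Fin.ext (by simpa [hR0] using h)
        rw [this] at hz
        simp [Mwit, hR0, hc0] at hz
        exact absurd (hc0.symm.trans hz) (by decide)
      have hz1 : z.val ≠ 1 := by
        intro h
        have : z = R1 := Fin.ext (by simpa [hR1] using h)
        rw [this] at hz
        simp [Mwit, hR1, hc1] at hz
        exact absurd (hc1.symm.trans hz) (by decide)
      have hCz : C z = true := by
        simpa [Mwit, hz0] using hz
      refine ⟨R0, z, ⟨1, by omega⟩, ⟨3, by omega⟩, ?_, ?_, ?_, ?_, ?_⟩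
      · intro h; subst h; exact hz0 rfl
      · exact (hcol R0 1 (by omega)).trans (by simp [Mwit, hR0])
      · exact (hcol z 1 (by omega)).trans (by simp [Mwit, hz1])
      · exact (hlast R0).trans hc0
      · exact (hlast z).trans hCz
    · -- both true : use column 2 mismatch
      obtain ⟨z, hz⟩ := hC' ⟨2, by omega⟩
      have hz0 : z.val ≠ 0 := by
        intro h
        have : z = R0 := Fin.ext (by simpa [hR0] using h)
        rw [this] at hz
        simp [Mwit, hR0, hc0] at hz
        exact absurd (hc0.symm.trans hz) (by decide)
      have hz1 : z.val ≠ 1 := by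
        intro h
        have : z = R1 := Fin.ext (by simpa [hR1] using h)
        rw [this] at hz
        simp [Mwit, hR1, hc1] at hz
        exact absurd (hc1.symm.trans hz) (by decide)
      have hCz : C z = true := by
        simpa [Mwit, hz0, hz1] using hz
      refine ⟨R0, z, ⟨1, by omega⟩, ⟨3, by omega⟩, ?_, ?_, ?_, ?_, ?_⟩
      · intro h; subst h; exact hz0 rfl
      · exact (hcol R0 1 (by omega)).trans (by simp [Mwit, hR0])
      · exact (hcol z 1 (by omega)).trans (by simp [Mwit, hz1])
      · exact (hlast R0).trans hc0
      · exact (hlast z).trans hCz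

end Witness
section Lower
variable {n : ℕ}

lemma nc_refl (p : Fin n → Bool) : NC p p := by
  rintro i j hij ⟨h1, h2, h3, h4⟩
  rw [h1] at h3
  exact absurd h3 (by decide)

lemma lower_bound (hn : 2 ≤ n) (m : ℕ)
    (hm : m ∈ satSet (![![false, true], ![false, true]] : Fin 2 → Fin 2 → Bool) n) : 3 ≤ m := by
  obtain ⟨M, hsimp, hfree, hsat⟩ := hm
  rw [sub_iff] at hfree
  by_contra hlt
  push_neg at hlt
  interval_cases m
  · -- m = 0
    have h := hsat (fun _ => false) (by rintro ⟨j, -⟩; exact j.elim0)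
    rw [sub_iff] at h
    obtain ⟨i, j, a, b, hij, h1, h2, h3, h4⟩ := h
    have hab : a = b := Fin.ext (by omega)
    rw [hab] at h1
    rw [h1] at h3
    exact absurd h3 (by decide)
  · -- m = 1
    set R0 : Fin n := ⟨0, by omega⟩ with hR0
    set C : Fin n → Bool := fun i => if i = R0 then !(M i 0) else M i 0 with hCdef
    have hnotcol : ¬ IsCol M C := by
      rintro ⟨j, hj⟩
      have hj0 := hj R0
      have hj1 : j = 0 := Fin.eq_zero j
      rw [hj1] at hj0
      simp [hCdef] at hj0
    have h := hsat C hnotcol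
    rw [sub_iff] at h
    obtain ⟨i, j, a, b, hij, h1, h2, h3, h4⟩ := h
    have e0 : ∀ i : Fin n, addCol M C i ⟨0, by omega⟩ = M i 0 := fun i => dif_pos (by simp)
    have e1 : ∀ i : Fin n, addCol M C i ⟨1, by omega⟩ = C i := fun i => dif_neg (by simp)
    have hnc1 : NC (fun i => M i 0) C := nc_one _ _ R0 (fun z hz => by simp [hCdef, hz])
    have hnc2 : NC C (fun i => M i 0) := nc_one _ _ R0 (fun z hz => by simp [hCdef, hz])
    fin_cases a <;> fin_cases b
    · rw [e0 i] at h1 h3; rw [h1] at h3; exact absurd h3 (by decide)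
    · rw [e0 i] at h1; rw [e0 j] at h2; rw [e1 i] at h3; rw [e1 j] at h4
      exact hnc1 i j hij ⟨h1, h2, h3, h4⟩
    · rw [e1 i] at h1; rw [e1 j] at h2; rw [e0 i] at h3; rw [e0 j] at h4
      exact hnc2 i j hij ⟨h1, h2, h3, h4⟩
    · rw [e1 i] at h1 h3; rw [h1] at h3; exact absurd h3 (by decide)
  · -- m = 2
    set c : Fin n → Bool := fun i => M i 0 with hc
    set d : Fin n → Bool := fun i => M i 1 with hd
    have hne : c ≠ d := by
      intro h
      have : (0 : Fin 2) = 1 := hsimp 0 1 (fun i => congrFun h i)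
      exact absurd this (by decide)
    have hcd : NC c d := fun i j hij ⟨h1, h2, h3, h4⟩ => hfree ⟨i, j, 0, 1, hij, h1, h2, h3, h4⟩
    have hdc : NC d c := fun i j hij ⟨h1, h2, h3, h4⟩ => hfree ⟨i, j, 1, 0, hij, h1, h2, h3, h4⟩
    obtain ⟨x, hx⟩ := Function.ne_iff.mp hne
    obtain ⟨C, hCc, hCd, hncC1, hncC2, hncC3, hncC4⟩ :
        ∃ C : Fin n → Bool, C ≠ c ∧ C ≠ d ∧ NC c C ∧ NC C c ∧ NC d C ∧ NC C d := by
      cases hcx : c x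
      · have hdx : d x = true := by
          cases hdx : d x
          · rw [hcx, hdx] at hx; exact absurd rfl hx
          · rfl
        exact key' hn c d hcd hdc x hcx hdx
      · have hdx : d x = false := by
          cases hdx : d x
          · rfl
          · rw [hcx, hdx] at hx; exact absurd rfl hx
        obtain ⟨C, h1, h2, h3, h4, h5, h6⟩ := key' hn d c hdc hcd x hdx hcx
        exact ⟨C, h2, h1, h5, h6, h3, h4⟩
    have hnotcol : ¬ IsCol M C := by
      rintro ⟨j, hj⟩
      fin_cases j
      · exact hCc (funext fun i => (hj i).symm)
      · exact hCd (funext fun i => (hj i).symm)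
    have h := hsat C hnotcol
    rw [sub_iff] at h
    obtain ⟨i, j, a, b, hij, h1, h2, h3, h4⟩ := h
    have e0 : ∀ i : Fin n, addCol M C i ⟨0, by omega⟩ = c i := fun i => dif_pos (by simp)
    have e1 : ∀ i : Fin n, addCol M C i ⟨1, by omega⟩ = d i := fun i => dif_pos (by simp)
    have e2 : ∀ i : Fin n, addCol M C i ⟨2, by omega⟩ = C i := fun i => dif_neg (by simp)
    fin_cases a <;> fin_cases b
    · rw [e0 i] at h1 h3; rw [h1] at h3; exact absurd h3 (by decide)
    · rw [e0 i] at h1; rw [e0 j] at h2; rw [e1 i] at h3; rw [e1 j] at h4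
      exact hcd i j hij ⟨h1, h2, h3, h4⟩
    · rw [e0 i] at h1; rw [e0 j] at h2; rw [e2 i] at h3; rw [e2 j] at h4
      exact hncC1 i j hij ⟨h1, h2, h3, h4⟩
    · rw [e1 i] at h1; rw [e1 j] at h2; rw [e0 i] at h3; rw [e0 j] at h4
      exact hdc i j hij ⟨h1, h2, h3, h4⟩
    · rw [e1 i] at h1 h3; rw [h1] at h3; exact absurd h3 (by decide)
    · rw [e1 i] at h1; rw [e1 j] at h2; rw [e2 i] at h3; rw [e2 j] at h4
      exact hncC3 i j hij ⟨h1, h2, h3, h4⟩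
    · rw [e2 i] at h1; rw [e2 j] at h2; rw [e0 i] at h3; rw [e0 j] at h4
      exact hncC2 i j hij ⟨h1, h2, h3, h4⟩
    · rw [e2 i] at h1; rw [e2 j] at h2; rw [e1 i] at h3; rw [e1 j] at h4
      exact hncC4 i j hij ⟨h1, h2, h3, h4⟩
    · rw [e2 i] at h1 h3; rw [h1] at h3; exact absurd h3 (by decide)

end Lower

theorem stmt_15 (n : ℕ) (hn : 2 ≤ n) :
    IsLeast (satSet (![![false, true], ![false, true]] : Fin 2 → Fin 2 → Bool) n) 3 := by
  constructor
  · exact ⟨Mwit n, mwit_saturated hn⟩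
  · exact fun m hm => lower_bound hn m hm
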